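/- For k ≥ 2, the Fibonacci polynomial x^k − x^{k−1} − ⋯ − x − 1 is irreducible over ℚ. -/

import Mathlib

open Polynomial
-- Lemma M: quantitative bound on roots of w^{k+1} = 2w-1 in the closed unit disk
lemma fibAuxM (k : ℕ) (hk : 2 ≤ k) (w : ℂ) (hw : w ^ (k+1) = 2*w - 1)
    (hb : ‖w‖ ≤ 1) (hne : w ≠ 1) : (k+1 : ℝ) * ‖w‖ ^ k < 2 := by
  by_contra hcon
  push_neg at hcon
  set t : ℝ := ‖w‖ with ht
  have ht0 : 0 ≤ t := norm_nonneg w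
  have htk : (1:ℝ) ≤ (k+1) * t^k := by nlinarith
  rcases lt_or_eq_of_le hb with hlt | heq
  · -- t < 1
    have h2 : 2*t - 1 ≤ t^(k+1) := by
      have : ‖(2:ℂ)*w‖ - ‖(1:ℂ)‖ ≤ ‖2*w - 1‖ := norm_sub_norm_le _ _
      have hnw : ‖2*w - 1‖ = t^(k+1) := by rw [← hw, norm_pow]
      simp only [norm_mul, Complex.norm_ofNat, norm_one] at this
      linarith [this, hnw ▸ this]
    -- sum bound
    have hgeom : (1 - t) * (∑ i ∈ Finset.range (k+1), t^i) = 1 - t^(k+1) := by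
      have := geom_sum_mul t (k+1)
      linarith [this]
    have hsum : (2:ℝ) < ∑ i ∈ Finset.range (k+1), t^i := by
      have hsplit : ∑ i ∈ Finset.range (k+1), t^i
          = (∑ i ∈ Finset.range k, t^(i+1)) + 1 := by
        rw [Finset.sum_range_succ']; simp
      have hterm : ∀ i ∈ Finset.range k, t^k ≤ t^(i+1) := by
        intro i hi
        exact pow_le_pow_of_le_one ht0 hlt.le (Nat.succ_le_of_lt (Finset.mem_range.mp hi))
      have hlb : (k:ℝ) * t^k ≤ ∑ i ∈ Finset.range k, t^(i+1) := by
        calc (k:ℝ) * t^k = ∑ _i ∈ Finset.range k, t^k := by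
              rw [Finset.sum_const, Finset.card_range, nsmul_eq_mul]
          _ ≤ _ := Finset.sum_le_sum hterm
      have htk1 : t^k < 1 := by
        calc t^k ≤ t^1 := pow_le_pow_of_le_one ht0 hlt.le (by omega)
          _ < 1 := by simpa using hlt
      nlinarith
    nlinarith [hgeom, hsum, h2]
  · -- t = 1 forces w = 1
    have h1 : ‖2*w - 1‖ = 1 := by
      rw [← hw, norm_pow, ← ht, heq, one_pow]
    have hsq : Complex.normSq (2*w - 1) = 1 := by
      have := Complex.sq_norm (2*w - 1)
      nlinarith [this, h1]
    have hn1 : Complex.normSq w = 1 := by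
      have := Complex.sq_norm w
      nlinarith [this, heq, ht]
    apply hne
    have hre : (2*w - 1).re = 2*w.re - 1 := by simp
    have him : (2*w - 1).im = 2*w.im := by simp
    rw [Complex.normSq_apply, hre, him] at hsq
    rw [Complex.normSq_apply] at hn1
    have : w.re = 1 := by nlinarith
    have him0 : w.im = 0 := by nlinarith
    exact Complex.ext (by simp [this]) (by simp [him0])


-- convert a big root of P to the w-form
lemma fibAuxRoot (k : ℕ) (hk : 2 ≤ k) (z : ℂ)
    (hz : z ^ k - ∑ i ∈ Finset.range k, z ^ i = 0) (hb : 1 ≤ ‖z‖) :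
    z ≠ 0 ∧ z⁻¹ ^ (k+1) = 2*z⁻¹ - 1 ∧ ‖z⁻¹‖ ≤ 1 ∧ z⁻¹ ≠ 1 := by
  have hz0 : z ≠ 0 := by
    intro h; rw [h] at hb; simp at hb; linarith
  have hz1 : z ≠ 1 := by
    intro h
    rw [h] at hz
    simp only [one_pow, Finset.sum_const, Finset.card_range, nsmul_eq_mul, mul_one] at hz
    have : (k:ℂ) = 1 := by linear_combination -hz
    have := congrArg Complex.re this
    simp at this
    omega
  have hgeom := geom_sum_mul z k
  have hF : z^(k+1) - 2*z^k + 1 = 0 := by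
    have hz' : z ^ k = ∑ i ∈ Finset.range k, z ^ i := by linear_combination hz
    linear_combination (z-1) * hz + hgeom
  refine ⟨hz0, ?_, ?_, ?_⟩
  · have hzp : (z:ℂ)^(k+1) ≠ 0 := pow_ne_zero _ hz0
    have hinv : z * z⁻¹ = 1 := mul_inv_cancel₀ hz0
    have key : z^(k+1) * (z⁻¹^(k+1) - (2*z⁻¹ - 1)) = 0 := by
      have e1 : z^(k+1) * z⁻¹^(k+1) = 1 := by rw [← mul_pow, hinv, one_pow]
      have e2 : z^(k+1) * z⁻¹ = z^k := by rw [pow_succ, mul_assoc, hinv, mul_one]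
      calc z^(k+1) * (z⁻¹^(k+1) - (2*z⁻¹ - 1))
          = z^(k+1)*z⁻¹^(k+1) - 2*(z^(k+1)*z⁻¹) + z^(k+1) := by ring
        _ = 1 - 2*z^k + z^(k+1) := by rw [e1, e2]
        _ = 0 := by linear_combination hF
    rcases mul_eq_zero.mp key with h|h
    · exact absurd h hzp
    · linear_combination h
  · rw [norm_inv]
    rw [inv_le_one_iff₀]  -- guess name
    right; exact hb
  · intro h
    apply hz1
    have : z * z⁻¹ = z * 1 := by rw [h]
    rw [mul_inv_cancel₀ hz0, mul_one] at this
    exact this.symm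
-- distinct big roots impossible
lemma fibAuxD (k : ℕ) (hk : 2 ≤ k) (w₁ w₂ : ℂ)
    (h1 : w₁ ^ (k+1) = 2*w₁ - 1) (h2 : w₂ ^ (k+1) = 2*w₂ - 1)
    (hb1 : ‖w₁‖ ≤ 1) (hb2 : ‖w₂‖ ≤ 1) (hn1 : w₁ ≠ 1) (hn2 : w₂ ≠ 1)
    (hne : w₁ ≠ w₂) : False := by
  have hgeom := geom_sum₂_mul w₁ w₂ (k+1)
  have hS : (∑ i ∈ Finset.range (k+1), w₁ ^ i * w₂ ^ (k - i)) = 2 := by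
    have hsub : w₁ - w₂ ≠ 0 := sub_ne_zero.mpr hne
    have : ((∑ i ∈ Finset.range (k+1), w₁ ^ i * w₂ ^ (k - i)) - 2) * (w₁ - w₂) = 0 := by
      have hexp : ∀ i ∈ Finset.range (k+1), w₁ ^ i * w₂ ^ (k + 1 - 1 - i) = w₁ ^ i * w₂ ^ (k - i) := by
        intro i _; norm_num
      rw [Finset.sum_congr rfl hexp] at hgeom
      calc ((∑ i ∈ Finset.range (k+1), w₁ ^ i * w₂ ^ (k - i)) - 2) * (w₁ - w₂)
          = (w₁^(k+1) - w₂^(k+1)) - 2*(w₁ - w₂) := by rw [← hgeom]; ring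
        _ = 0 := by rw [h1, h2]; ring
    rcases mul_eq_zero.mp this with h | h
    · linear_combination h
    · exact absurd h hsub
  set m : ℝ := max ‖w₁‖ ‖w₂‖ with hm
  have hm1 : ‖w₁‖ ≤ m := le_max_left _ _
  have hm2 : ‖w₂‖ ≤ m := le_max_right _ _
  have hm0 : 0 ≤ m := le_trans (norm_nonneg _) hm1
  have hbound : (2:ℝ) ≤ (k+1) * m ^ k := by
    have := congrArg norm hS
    simp only [Complex.norm_ofNat] at this
    calc (2:ℝ) = ‖(∑ i ∈ Finset.range (k+1), w₁ ^ i * w₂ ^ (k - i))‖ := this.symm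
      _ ≤ ∑ i ∈ Finset.range (k+1), ‖w₁ ^ i * w₂ ^ (k - i)‖ := norm_sum_le _ _
      _ ≤ ∑ _i ∈ Finset.range (k+1), m ^ k := by
          apply Finset.sum_le_sum
          intro i hi
          rw [norm_mul, norm_pow, norm_pow]
          calc ‖w₁‖^i * ‖w₂‖^(k-i) ≤ m^i * m^(k-i) := by
                apply mul_le_mul (pow_le_pow_left₀ (norm_nonneg _) hm1 i)
                  (pow_le_pow_left₀ (norm_nonneg _) hm2 _) (by positivity) (by positivity)
            _ = m ^ k := by
                rw [← pow_add]
                congr 1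
                have := Finset.mem_range.mp hi
                omega
      _ = (k+1) * m ^ k := by
          rw [Finset.sum_const, Finset.card_range, nsmul_eq_mul]; push_cast; ring
  -- apply fibAuxM to whichever w realizes the max
  rcases max_choice ‖w₁‖ ‖w₂‖ with h | h
  · have := fibAuxM k hk w₁ h1 hb1 hn1
    rw [hm, h] at hbound
    linarith
  · have := fibAuxM k hk w₂ h2 hb2 hn2
    rw [hm, h] at hbound
    linarith

-- multiset product of reals in [0,1]
lemma fibAuxProd (s : Multiset ℝ) (h : ∀ x ∈ s, 0 ≤ x ∧ x ≤ 1) :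
    0 ≤ s.prod ∧ s.prod ≤ 1 := by
  induction s using Multiset.induction_on with
  | empty => simp
  | cons a t ih =>
    have ha := h a (Multiset.mem_cons_self a t)
    have ht := ih (fun x hx => h x (Multiset.mem_cons_of_mem hx))
    rw [Multiset.prod_cons]
    constructor
    · exact mul_nonneg ha.1 ht.1
    · nlinarith [ha.1, ha.2, ht.1, ht.2]

-- the factor-with-small-roots contradiction
lemma fibSmall (c : ℤ[X]) (hdeg : c.natDegree ≠ 0)
    (h0 : IsUnit (c.eval 0)) (hl : IsUnit c.leadingCoeff)
    (hsmall : ∀ z : ℂ, (c.map (Int.castRingHom ℂ)).eval z = 0 → ‖z‖ < 1) : False := by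
  set φ := Int.castRingHom ℂ with hφ
  have hinj : Function.Injective φ := Int.cast_injective
  set cc : ℂ[X] := c.map φ with hcc
  have hc0 : c ≠ 0 := fun h => hdeg (by simp [h])
  have hcc0 : cc ≠ 0 := by
    rw [hcc]
    exact (Polynomial.map_ne_zero_iff hinj).mpr hc0
  have hsplit : cc.Splits := IsAlgClosed.splits cc
  have heq := (C_leadingCoeff_mul_prod_multiset_X_sub_C (splits_iff_card_roots.mp hsplit)).symm
  -- eval at 0
  have hev : cc.eval 0 = φ (c.eval 0) := by
    rw [hcc, Polynomial.eval_map, ← map_zero φ, Polynomial.eval₂_at_apply]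
  have hnev : ‖cc.eval 0‖ = 1 := by
    rcases Int.isUnit_iff.mp h0 with h | h <;> rw [hev, h] <;> simp [hφ]
  have hlead : ‖cc.leadingCoeff‖ = 1 := by
    rw [hcc, Polynomial.leadingCoeff_map_of_injective hinj]
    rcases Int.isUnit_iff.mp hl with h | h <;> rw [h] <;> simp [hφ]
  -- roots nonempty
  have hcard : cc.roots.card = cc.natDegree :=
    Polynomial.splits_iff_card_roots.mp hsplit
  have hccdeg : cc.natDegree = c.natDegree := by
    rw [hcc]; exact Polynomial.natDegree_map_eq_of_injective hinj c
  have hne : cc.roots ≠ 0 := by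
    intro h
    rw [h] at hcard
    simp only [Multiset.card_zero] at hcard
    exact hdeg (by omega)
  obtain ⟨r0, hr0⟩ := Multiset.exists_mem_of_ne_zero hne
  obtain ⟨t, hts⟩ := Multiset.exists_cons_of_mem hr0
  -- evaluate product formula at 0
  have hev2 : cc.eval 0 = cc.leadingCoeff * (cc.roots.map (fun r => -r)).prod := by
    conv_lhs => rw [heq]
    rw [Polynomial.eval_mul, Polynomial.eval_C, Polynomial.eval_multiset_prod,
      Multiset.map_map]
    congr 2
    apply Multiset.map_congr rfl
    intro r _
    simp
  have hnorm : (1:ℝ) = ((cc.roots.map (fun r => -r)).map norm).prod := by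
    have h' : ‖cc.eval 0‖ = ‖cc.leadingCoeff‖ * ((cc.roots.map (fun r => -r)).map norm).prod := by
      rw [hev2, norm_mul,
        show ‖(Multiset.map (fun r => -r) cc.roots).prod‖
          = (Multiset.map norm (Multiset.map (fun r => -r) cc.roots)).prod from
        map_multiset_prod (normHom.toMonoidHom : ℂ →* ℝ) _]
    rw [hnev, hlead, one_mul] at h'
    linarith [h']
  rw [Multiset.map_map] at hnorm
  have hmapeq : (cc.roots.map (fun r => ‖-r‖)) = cc.roots.map (fun r => ‖r‖) := by
    apply Multiset.map_congr rfl
    intro r _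
    simp
  rw [show ((norm : ℂ → ℝ) ∘ fun r => -r) = fun r => ‖-r‖ from rfl, hmapeq] at hnorm
  -- bound the product
  have hroot_small : ∀ r ∈ cc.roots, ‖r‖ < 1 := by
    intro r hr
    exact hsmall r ((Polynomial.mem_roots hcc0).mp hr)
  rw [hts, Multiset.map_cons, Multiset.prod_cons] at hnorm
  have hr0small : ‖r0‖ < 1 := hroot_small r0 hr0
  have htprod := fibAuxProd (t.map (fun r => ‖r‖)) (by
    intro x hx
    obtain ⟨r, hr, rfl⟩ := Multiset.mem_map.mp hx
    have : r ∈ cc.roots := by rw [hts]; exact Multiset.mem_cons_of_mem hr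
    exact ⟨norm_nonneg r, (hroot_small r this).le⟩)
  nlinarith [htprod.1, htprod.2, hr0small, norm_nonneg r0]


-- the double-root case
lemma fibDouble (k : ℕ) (hk : 2 ≤ k) (z : ℂ) (hb : 1 ≤ ‖z‖)
    (hP : z ^ k - ∑ i ∈ Finset.range k, z ^ i = 0)
    (hd : (k+1 : ℂ) * z ^ k - (2*k : ℂ) * z ^ (k-1) = 0) : False := by
  obtain ⟨hz0, hweq, hwb, hwne⟩ := fibAuxRoot k hk z hP hb
  have hM := fibAuxM k hk z⁻¹ hweq hwb hwne
  have hk0 : (k:ℂ) ≠ 0 := by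
    simp only [ne_eq, Nat.cast_eq_zero]; omega
  have hzk1 : z ^ (k-1) ≠ 0 := pow_ne_zero _ hz0
  -- (k+1) z = 2k
  have hz2 : ((k:ℂ)+1) * z = 2*k := by
    have hsplit : (((k:ℂ)+1) * z - 2*k) * z^(k-1) = 0 := by
      have hzz : z * z^(k-1) = z^k := by
        rw [← pow_succ']
        congr 1
        omega
      calc (((k:ℂ)+1) * z - 2*k) * z^(k-1)
          = ((k:ℂ)+1) * (z * z^(k-1)) - (2*k) * z^(k-1) := by ring
        _ = (k+1 : ℂ) * z ^ k - (2*k : ℂ) * z ^ (k-1) := by rw [hzz]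
        _ = 0 := hd
    rcases mul_eq_zero.mp hsplit with h | h
    · linear_combination h
    · exact absurd h hzk1
  -- 2 z⁻¹ - 1 = 1/k
  have h2w : 2*z⁻¹ - 1 = ((k:ℂ))⁻¹ := by
    field_simp
    linear_combination -hz2
  -- norms
  have hnz : ‖z‖ = 2*k/(k+1) := by
    have := congrArg norm hz2
    rw [norm_mul] at this
    have h1 : ‖((k:ℂ)+1)‖ = (k:ℝ)+1 := by
      rw [show ((k:ℂ)+1) = ((k+1:ℕ):ℂ) by push_cast; ring, Complex.norm_natCast]
      push_cast; ring
    have h2 : ‖(2*(k:ℂ))‖ = 2*(k:ℝ) := by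
      rw [show (2*(k:ℂ)) = ((2*k:ℕ):ℂ) by push_cast; ring, Complex.norm_natCast]
      push_cast; ring
    rw [h1, h2] at this
    have hkpos : (0:ℝ) < (k:ℝ)+1 := by positivity
    rw [eq_div_iff (ne_of_gt hkpos)]
    linarith [this]
  have hkR : (2:ℝ) ≤ (k:ℝ) := by exact_mod_cast hk
  have hnw : ‖z⁻¹‖ = ((k:ℝ)+1)/(2*k) := by
    rw [norm_inv, hnz, inv_div]
  have hnwk : ‖z⁻¹‖^(k+1) = ((k:ℝ))⁻¹ := by
    rw [← norm_pow, hweq, h2w, norm_inv]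
    congr 1
    exact Complex.norm_natCast k
  have hkpos : (0:ℝ) < (k:ℝ) := by linarith
  have hwpos : (0:ℝ) < ‖z⁻¹‖ := by rw [hnw]; positivity
  have key := mul_lt_mul_of_pos_left hM hwpos
  have e1 : ‖z⁻¹‖ * ((k+1) * ‖z⁻¹‖^k) = ((k:ℝ))⁻¹ * ((k:ℝ)+1) := by
    calc ‖z⁻¹‖ * (((k:ℝ)+1) * ‖z⁻¹‖^k) = ((k:ℝ)+1) * ‖z⁻¹‖^(k+1) := by ring
      _ = ((k:ℝ))⁻¹ * ((k:ℝ)+1) := by rw [hnwk]; ring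
  rw [e1, hnw] at key
  rw [div_mul_eq_mul_div, inv_mul_eq_div] at key
  rw [div_lt_div_iff₀ hkpos (by positivity : (0:ℝ) < 2*(k:ℝ))] at key
  nlinarith [key]


-- irreducibility over ℤ
lemma fibIntIrreducible (k : ℕ) (hk : 2 ≤ k) :
    Irreducible ((X : ℤ[X]) ^ k - ∑ i ∈ Finset.range k, X ^ i) := by
  set P : ℤ[X] := X ^ k - ∑ i ∈ Finset.range k, X ^ i with hP
  have hk0 : 0 < k := by omega
  have hdegsum : (∑ i ∈ Finset.range k, (X:ℤ[X]) ^ i).degree < (k:ℕ) := by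
    apply lt_of_le_of_lt (Polynomial.degree_sum_le _ _)
    rw [Finset.sup_lt_iff (by exact_mod_cast WithBot.bot_lt_coe k)]
    intro i hi
    rw [Polynomial.degree_X_pow]
    exact_mod_cast Finset.mem_range.mp hi
  have hmonic : P.Monic := Polynomial.monic_X_pow_sub hdegsum
  have hdeg : P.degree = k := by
    rw [hP, Polynomial.degree_sub_eq_left_of_degree_lt
      (by rwa [Polynomial.degree_X_pow]), Polynomial.degree_X_pow]
  have hnd : P.natDegree = k := Polynomial.natDegree_eq_of_degree_eq_some hdeg
  have hP0 : P ≠ 0 := hmonic.ne_zero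
  -- eval facts
  have hsum0 : (∑ i ∈ Finset.range k, (0:ℤ) ^ i) = 1 := by
    rw [Finset.sum_eq_single 0]
    · simp
    · intro i _ hi; exact zero_pow hi
    · intro h; exact absurd (Finset.mem_range.mpr hk0) h
  have hev0 : P.eval 0 = -1 := by
    simp [hP, Polynomial.eval_finset_sum, zero_pow (by omega : k ≠ 0), hsum0]
  constructor
  · intro hu
    have := Polynomial.natDegree_eq_zero_of_isUnit hu
    omega
  · rintro a b hab
    by_contra hcon
    push_neg at hcon
    obtain ⟨ha, hb⟩ := hcon
    have ha0 : a ≠ 0 := by rintro rfl; simp at hab; exact hP0 hab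
    have hb0 : b ≠ 0 := by rintro rfl; simp at hab; exact hP0 hab
    have hlc : a.leadingCoeff * b.leadingCoeff = 1 := by
      rw [← Polynomial.leadingCoeff_mul, ← hab]; exact hmonic
    have hlca : IsUnit a.leadingCoeff := IsUnit.of_mul_eq_one _ hlc
    have hlcb : IsUnit b.leadingCoeff := IsUnit.of_mul_eq_one _ (by rw [mul_comm] at hlc; exact hlc)
    have hdega : a.natDegree ≠ 0 := by
      intro h
      obtain ⟨c, rfl⟩ := Polynomial.natDegree_eq_zero.mp h
      exact ha (Polynomial.isUnit_C.mpr (by rwa [Polynomial.leadingCoeff_C] at hlca))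
    have hdegb : b.natDegree ≠ 0 := by
      intro h
      obtain ⟨c, rfl⟩ := Polynomial.natDegree_eq_zero.mp h
      exact hb (Polynomial.isUnit_C.mpr (by rwa [Polynomial.leadingCoeff_C] at hlcb))
    have hev0' : a.eval 0 * b.eval 0 = -1 := by
      rw [← Polynomial.eval_mul, ← hab, hev0]
    have hua : IsUnit (a.eval 0) := by
      apply isUnit_of_mul_isUnit_left (y := b.eval 0)
      rw [hev0']; exact IsUnit.neg isUnit_one
    have hub : IsUnit (b.eval 0) := by
      apply isUnit_of_mul_isUnit_left (y := a.eval 0)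
      rw [mul_comm, hev0']; exact IsUnit.neg isUnit_one
    -- complex side
    set φ := Int.castRingHom ℂ with hφ
    have hevc : ∀ z : ℂ, (a.map φ).eval z * (b.map φ).eval z
        = z ^ k - ∑ i ∈ Finset.range k, z ^ i := by
      intro z
      rw [← Polynomial.eval_mul, ← Polynomial.map_mul, ← hab]
      simp [hP, Polynomial.map_sub, Polynomial.map_pow, Polynomial.map_sum,
        Polynomial.eval_finset_sum]
    by_cases hA : ∀ z : ℂ, (a.map φ).eval z = 0 → ‖z‖ < 1
    · exact fibSmall a hdega hua hlca hA
    by_cases hB : ∀ z : ℂ, (b.map φ).eval z = 0 → ‖z‖ < 1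
    · exact fibSmall b hdegb hub hlcb hB
    push_neg at hA hB
    obtain ⟨z₁, hz₁, hbz₁⟩ := hA
    obtain ⟨z₂, hz₂, hbz₂⟩ := hB
    have hPz₁ : z₁ ^ k - ∑ i ∈ Finset.range k, z₁ ^ i = 0 := by
      rw [← hevc z₁, hz₁, zero_mul]
    have hPz₂ : z₂ ^ k - ∑ i ∈ Finset.range k, z₂ ^ i = 0 := by
      rw [← hevc z₂, hz₂, mul_zero]
    obtain ⟨hz10, hw1, hb1, hn1⟩ := fibAuxRoot k hk z₁ hPz₁ hbz₁
    obtain ⟨hz20, hw2, hb2, hn2⟩ := fibAuxRoot k hk z₂ hPz₂ hbz₂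
    by_cases hzz : z₁ = z₂
    · -- double root
      subst hzz
      -- z₁ is a root of both a.map φ and b.map φ, hence double root of the product
      have d1 : (X - C z₁) ∣ a.map φ := Polynomial.dvd_iff_isRoot.mpr hz₁
      have d2 : (X - C z₁) ∣ b.map φ := Polynomial.dvd_iff_isRoot.mpr hz₂
      obtain ⟨u, hu⟩ := mul_dvd_mul d1 d2
      -- derivative of the product vanishes at z₁
      have hder : ((a.map φ) * (b.map φ)).derivative.eval z₁ = 0 := by
        rw [hu]
        simp [Polynomial.derivative_mul]
      have hprodz : ((a.map φ) * (b.map φ)).eval z₁ = 0 := by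
        rw [Polynomial.eval_mul, hz₁, zero_mul]
      have hGder : (((X:ℂ[X]) - 1) * ((a.map φ) * (b.map φ))).derivative.eval z₁ = 0 := by
        rw [Polynomial.derivative_mul]
        simp only [Polynomial.eval_add, Polynomial.eval_mul, hprodz, hder,
          mul_zero, add_zero, zero_add]
      have hprod : (a.map φ) * (b.map φ)
          = (X:ℂ[X])^k - ∑ i ∈ Finset.range k, X^i := by
        rw [← Polynomial.map_mul, ← hab, hP]
        simp [Polynomial.map_sub, Polynomial.map_pow, Polynomial.map_sum]
      have hFid : ((X:ℂ[X]) - 1) * ((X:ℂ[X])^k - ∑ i ∈ Finset.range k, X^i)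
          = X^(k+1) - 2*X^k + 1 := by
        linear_combination -(geom_sum_mul (X:ℂ[X]) k)
      rw [hprod, hFid] at hGder
      simp [Polynomial.derivative_X_pow] at hGder
      apply fibDouble k hk z₁ hbz₁ hPz₁
      push_cast at hGder ⊢
      linear_combination hGder
    · exact fibAuxD k hk z₁⁻¹ z₂⁻¹ hw1 hw2 hb1 hb2 hn1 hn2
        (fun h => hzz (inv_injective h))


lemma fibMonicInt (k : ℕ) (hk : 2 ≤ k) :
    ((X : ℤ[X]) ^ k - ∑ i ∈ Finset.range k, X ^ i).Monic := by
  apply Polynomial.monic_X_pow_sub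
  apply lt_of_le_of_lt (Polynomial.degree_sum_le _ _)
  rw [Finset.sup_lt_iff (by exact_mod_cast WithBot.bot_lt_coe k)]
  intro i hi
  rw [Polynomial.degree_X_pow]
  exact_mod_cast Finset.mem_range.mp hi

theorem fibonacci_polynomial_irreducible (k : ℕ) (hk : 2 ≤ k) :
    Irreducible ((X : ℚ[X]) ^ k - ∑ i ∈ Finset.range k, X ^ i) := by
  have h := (IsPrimitive.Int.irreducible_iff_irreducible_map_cast
    (fibMonicInt k hk).isPrimitive).mp (fibIntIrreducible k hk)
  simp only [Polynomial.map_sub, Polynomial.map_pow, Polynomial.map_sum,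
    Polynomial.map_X] at h
  exact h
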